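/- arXiv:2504.11660 — 4 statements merged into one kernel-verified Lean document; each statement's English description precedes it below -/
import Mathlib

section
/- Let E ⊆ ℝ^d be bounded and let p : E → ℝ^n be a map such that p(E) is bounded and, for every δ ∈ (0,1) and every ξ ∈ ℝ^n, the preimage p⁻¹(B(ξ,δ)) ∩ E can be covered by at most M(δ) balls of radius δ, where for every ε > 0 there is a constant C_ε with M(δ) ≤ C_ε δ^{-ε}. Then the upper box dimension of E is at most the upper box dimension of p(E). -/
open Filter Set Metric Bornology

/-- Minimal number of δ-balls needed to cover `E`. -/
noncomputable def coveringNumber {X : Type*} [PseudoMetricSpace X] (E : Set X) (δ : ℝ) : ℕ :=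
  sInf {n : ℕ | ∃ s : Finset X, s.card = n ∧ E ⊆ ⋃ x ∈ s, Metric.ball x δ}

/-- Upper box dimension: limsup of log N(E,δ) / (-log δ) as δ → 0⁺. -/
noncomputable def ubdim {X : Type*} [PseudoMetricSpace X] (E : Set X) : ℝ :=
  Filter.limsup (fun δ : ℝ => Real.log (coveringNumber E δ) / (-Real.log δ))
    (nhdsWithin 0 (Set.Ioi 0))

/-- Packing dimension via countable covers by bounded sets. -/
noncomputable def pdim {X : Type*} [PseudoMetricSpace X] (E : Set X) : ℝ :=
  sInf {a : ℝ | ∃ C : ℕ → Set X, (E ⊆ ⋃ i, C i) ∧ (∀ i, IsBounded (C i)) ∧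
    ∀ i, ubdim (C i) ≤ a}

lemma grid_cover {n : ℕ} (S : Set (EuclideanSpace ℝ (Fin n))) (hS : IsBounded S) :
    ∃ C ≥ (1:ℝ), ∀ δ ∈ Set.Ioo (0:ℝ) 1, ∃ s : Finset (EuclideanSpace ℝ (Fin n)),
      (s.card : ℝ) ≤ (C / δ) ^ n ∧ S ⊆ ⋃ x ∈ s, Metric.ball x δ := by
  classical
  obtain ⟨R₀, hR₀⟩ := hS.subset_closedBall 0
  set R : ℝ := max R₀ 1 with hRdef
  have hR1 : (1:ℝ) ≤ R := le_max_right _ _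
  have hRpos : (0:ℝ) < R := lt_of_lt_of_le one_pos hR1
  have hSR : S ⊆ Metric.closedBall 0 R :=
    hR₀.trans (Metric.closedBall_subset_closedBall (le_max_left _ _))
  set c : ℝ := Real.sqrt n + 1 with hcdef
  have hsn : (0:ℝ) ≤ Real.sqrt n := Real.sqrt_nonneg _
  have hc1 : (1:ℝ) ≤ c := by simp [hcdef]
  refine ⟨4 * R * c + 5, by nlinarith, ?_⟩
  rintro δ ⟨hδ0, hδ1⟩
  set h : ℝ := δ / (2 * c) with hhdef
  have hhpos : 0 < h := by positivity
  set K : ℕ := ⌈R / h⌉₊ + 1 with hKdef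
  refine ⟨(Finset.Icc (fun _ => -(K:ℤ)) (fun _ => (K:ℤ))).image
      (fun k : Fin n → ℤ => (WithLp.equiv 2 _).symm (fun i => h * k i)), ?_, ?_⟩
  · refine le_trans ?_ (pow_le_pow_left₀ (by positivity) (show (2*K+1 : ℝ) ≤ (4*R*c+5)/δ from ?_) n)
    · calc ((Finset.image _ _).card : ℝ) ≤ ((Finset.Icc (fun _ : Fin n => -(K:ℤ)) (fun _ => (K:ℤ))).card : ℝ) := by
            exact_mod_cast Finset.card_image_le
        _ = (2*K+1 : ℝ) ^ n := by
            have hcard : (Finset.Icc (fun _ : Fin n => -(K:ℤ)) (fun _ => (K:ℤ))).card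
                = (2*K+1)^n := by
              rw [Pi.card_Icc, Finset.prod_const, Int.card_Icc, Finset.card_univ,
                Fintype.card_fin]
              congr 1
              omega
            rw [hcard]
            push_cast
            ring
    · have hceil : (⌈R / h⌉₊ : ℝ) < R / h + 1 := Nat.ceil_lt_add_one (by positivity)
      have h1 : (2*K+1 : ℝ) = 2 * (⌈R / h⌉₊ : ℝ) + 3 := by push_cast [hKdef]; ring
      have h2 : R / h = 2 * R * c / δ := by rw [hhdef]; field_simp
      have h4 : 2*R*c/δ*δ = 2*R*c := div_mul_cancel₀ _ (ne_of_gt hδ0)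
      have h3 : (⌈R/h⌉₊:ℝ) * δ < 2*R*c + δ := by
        nlinarith [mul_lt_mul_of_pos_right (h2 ▸ hceil) hδ0]
      rw [le_div_iff₀ hδ0]
      nlinarith [h3, hRpos, hc1, hδ1, hδ0]
  · intro x hx
    have hxnorm : ∀ i, |x i| ≤ R := by
      intro i
      have h1 : dist x 0 = Real.sqrt (∑ j, dist (x j) ((0:EuclideanSpace ℝ (Fin n)) j) ^ 2) :=
        EuclideanSpace.dist_eq x 0
      have h2 : |x i| ^ 2 ≤ ∑ j, dist (x j) ((0:EuclideanSpace ℝ (Fin n)) j) ^ 2 := by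
        have := Finset.single_le_sum
          (f := fun j => dist (x j) ((0:EuclideanSpace ℝ (Fin n)) j) ^ 2)
          (fun j _ => sq_nonneg _) (Finset.mem_univ i)
        simpa [Real.dist_eq] using this
      calc |x i| = Real.sqrt (|x i| ^ 2) := by rw [Real.sqrt_sq (abs_nonneg _)]
        _ ≤ Real.sqrt (∑ j, dist (x j) ((0:EuclideanSpace ℝ (Fin n)) j) ^ 2) :=
            Real.sqrt_le_sqrt h2
        _ = dist x 0 := h1.symm
        _ ≤ R := hSR hx
    have hK' : ((K:ℕ):ℝ) = (⌈R/h⌉₊ : ℝ) + 1 := by rw [hKdef]; push_cast; ring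
    have hceil2 : R / h ≤ (⌈R/h⌉₊:ℝ) := Nat.le_ceil _
    have hRhK : R / h ≤ (K:ℝ) := by
      have := Nat.le_ceil (R / h)
      linarith
    set k : Fin n → ℤ := fun i => ⌊x i / h⌋ with hk
    have hkmem : k ∈ Finset.Icc (fun _ : Fin n => -(K:ℤ)) (fun _ => (K:ℤ)) := by
      rw [Finset.mem_Icc]
      constructor <;> intro i
      · have h1 : x i / h - 1 < (k i : ℝ) := Int.sub_one_lt_floor _
        have h2 : -R ≤ x i := (abs_le.mp (hxnorm i)).1
        have h3 : -R / h ≤ x i / h := by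
          rw [div_le_div_iff₀ hhpos hhpos]
          exact mul_le_mul_of_nonneg_right h2 hhpos.le
        have : ((-(K:ℤ)):ℝ) ≤ (k i : ℝ) := by
          push_cast
          have : -(R/h) = -R/h := (neg_div _ _).symm
          linarith
        exact_mod_cast this
      · have h1 : (k i : ℝ) ≤ x i / h := Int.floor_le _
        have h2 : x i ≤ R := (abs_le.mp (hxnorm i)).2
        have h3 : x i / h ≤ R / h := by
          rw [div_le_div_iff₀ hhpos hhpos]
          exact mul_le_mul_of_nonneg_right h2 hhpos.le
        have : (k i : ℝ) ≤ ((K:ℤ):ℝ) := by push_cast; linarith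
        exact_mod_cast this
    refine Set.mem_iUnion₂.mpr ⟨_, Finset.mem_image_of_mem _ hkmem, ?_⟩
    rw [Metric.mem_ball, dist_comm, EuclideanSpace.dist_eq]
    have hdiff : ∀ i, dist (x i) (((WithLp.equiv 2 (Fin n → ℝ)).symm (fun i => h * k i)) i) ≤ h := by
      intro i
      rw [WithLp.equiv_symm_apply, PiLp.toLp_apply, Real.dist_eq]
      have h1 : h * (k i : ℝ) ≤ x i := by
        have h1' : (k i : ℝ) ≤ x i / h := Int.floor_le _
        rw [mul_comm]
        exact (le_div_iff₀ hhpos).mp h1'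
      have h2 : x i < h * ((k i : ℝ) + 1) := by
        have h2' : x i / h < (k i : ℝ) + 1 := Int.lt_floor_add_one _
        rw [mul_comm]
        exact (div_lt_iff₀ hhpos).mp h2'
      rw [abs_le]
      constructor <;> nlinarith
    calc Real.sqrt (∑ i, dist (((WithLp.equiv 2 (Fin n → ℝ)).symm (fun i => h * k i)) i) (x i) ^ 2)
        ≤ Real.sqrt (∑ _i : Fin n, h ^ 2) := by
          apply Real.sqrt_le_sqrt
          apply Finset.sum_le_sum
          intro i _
          have := hdiff i
          rw [dist_comm] at this
          exact pow_le_pow_left₀ dist_nonneg this 2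
      _ = Real.sqrt (n * h ^ 2) := by
          rw [Finset.sum_const, Finset.card_univ, Fintype.card_fin, nsmul_eq_mul]
      _ = Real.sqrt n * h := by
          rw [Real.sqrt_mul (by positivity), Real.sqrt_sq hhpos.le]
      _ < δ := by
          rw [hhdef, mul_div_assoc']
          rw [div_lt_iff₀ (by positivity : (0:ℝ) < 2 * c)]
          nlinarith [mul_pos hδ0 (lt_of_lt_of_le one_pos hc1)]

lemma ubdim_empty {X : Type*} [PseudoMetricSpace X] : ubdim (∅ : Set X) = 0 := by
  have h0 : ∀ δ : ℝ, coveringNumber (∅ : Set X) δ = 0 := fun δ =>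
    Nat.sInf_eq_zero.mpr (Or.inl ⟨∅, Finset.card_empty, by simp⟩)
  simp [ubdim, h0]

theorem stmt3 {d n : ℕ} (E : Set (EuclideanSpace ℝ (Fin d))) (hE : IsBounded E)
    (p : EuclideanSpace ℝ (Fin d) → EuclideanSpace ℝ (Fin n))
    (hpE : IsBounded (p '' E)) (M : ℝ → ℕ)
    (hM : ∀ ε > (0:ℝ), ∃ Cε > (0:ℝ), ∀ δ ∈ Set.Ioo (0:ℝ) 1, (M δ : ℝ) ≤ Cε * δ ^ (-ε))
    (hcov : ∀ δ ∈ Set.Ioo (0:ℝ) 1, ∀ ξ : EuclideanSpace ℝ (Fin n),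
      ∃ s : Finset (EuclideanSpace ℝ (Fin d)), s.card ≤ M δ ∧
        p ⁻¹' Metric.ball ξ δ ∩ E ⊆ ⋃ x ∈ s, Metric.ball x δ) :
    ubdim E ≤ ubdim (p '' E) := by
  classical
  rcases E.eq_empty_or_nonempty with rfl | hne
  · rw [Set.image_empty, ubdim_empty, ubdim_empty]
  set F := nhdsWithin (0:ℝ) (Set.Ioi (0:ℝ)) with hF
  have hPne : (p '' E).Nonempty := hne.image p
  obtain ⟨C, hC1, hcovP⟩ := grid_cover (p '' E) hpE
  set f : ℝ → ℝ := fun δ => Real.log (coveringNumber E δ) / (-Real.log δ) with hfdef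
  set g : ℝ → ℝ := fun δ => Real.log (coveringNumber (p '' E) δ) / (-Real.log δ) with hgdef
  -- basic facts for δ ∈ (0,1)
  have hIoo : ∀ᶠ δ in F, δ ∈ Set.Ioo (0:ℝ) 1 :=
    Ioo_mem_nhdsGT_of_mem (Set.mem_Ico.mpr ⟨le_refl 0, one_pos⟩)
  have hLbig : ∀ A : ℝ, ∀ᶠ δ in F, A ≤ -Real.log δ := by
    intro A
    have := Filter.tendsto_atBot.mp Real.tendsto_log_nhdsGT_zero (-A)
    exact this.mono (fun δ hδ => by linarith)
  -- key pointwise bounds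
  have key : ∀ δ ∈ Set.Ioo (0:ℝ) 1,
      (1 ≤ coveringNumber E δ) ∧ (1 ≤ M δ) ∧ (1 ≤ coveringNumber (p '' E) δ) ∧
      ((coveringNumber E δ : ℝ) ≤ (M δ : ℝ) * (coveringNumber (p '' E) δ : ℝ)) ∧
      ((coveringNumber (p '' E) δ : ℝ) ≤ (C / δ) ^ n) := by
    rintro δ hδ
    obtain ⟨s₀, hs₀card, hs₀cov⟩ := hcovP δ hδ
    have hPsetne : {m : ℕ | ∃ s : Finset (EuclideanSpace ℝ (Fin n)), s.card = m ∧
        p '' E ⊆ ⋃ x ∈ s, Metric.ball x δ}.Nonempty := ⟨s₀.card, s₀, rfl, hs₀cov⟩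
    obtain ⟨s, hscard, hscov⟩ := Nat.sInf_mem hPsetne
    have hNPle : (coveringNumber (p '' E) δ : ℝ) ≤ (C / δ) ^ n := by
      have : coveringNumber (p '' E) δ ≤ s₀.card := Nat.sInf_le ⟨s₀, rfl, hs₀cov⟩
      calc (coveringNumber (p '' E) δ : ℝ) ≤ (s₀.card : ℝ) := by exact_mod_cast this
        _ ≤ (C / δ) ^ n := hs₀card
    choose t ht1 ht2 using hcov δ hδ
    have hTcov : E ⊆ ⋃ x ∈ s.biUnion t, Metric.ball x δ := by
      intro x hx
      have hpx : p x ∈ ⋃ ξ ∈ s, Metric.ball ξ δ := hscov ⟨x, hx, rfl⟩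
      obtain ⟨ξ, hξs, hξb⟩ := Set.mem_iUnion₂.mp hpx
      have hx' : x ∈ p ⁻¹' Metric.ball ξ δ ∩ E := ⟨hξb, hx⟩
      obtain ⟨y, hy, hyb⟩ := Set.mem_iUnion₂.mp (ht2 ξ hx')
      exact Set.mem_iUnion₂.mpr ⟨y, Finset.mem_biUnion.mpr ⟨ξ, hξs, hy⟩, hyb⟩
    have hNE : coveringNumber E δ ≤ (s.biUnion t).card :=
      Nat.sInf_le ⟨s.biUnion t, rfl, hTcov⟩
    have hTcard : (s.biUnion t).card ≤ s.card * M δ := by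
      calc (s.biUnion t).card ≤ ∑ ξ ∈ s, (t ξ).card := Finset.card_biUnion_le
        _ ≤ ∑ _ξ ∈ s, M δ := Finset.sum_le_sum (fun ξ _ => ht1 ξ)
        _ = s.card * M δ := by rw [Finset.sum_const, smul_eq_mul]
    -- M δ ≥ 1
    obtain ⟨x₀, hx₀⟩ := hne
    have hMδ : 1 ≤ M δ := by
      have hx' : x₀ ∈ p ⁻¹' Metric.ball (p x₀) δ ∩ E :=
        ⟨by simp [Metric.mem_ball, hδ.1], hx₀⟩
      obtain ⟨y, hy, -⟩ := Set.mem_iUnion₂.mp (ht2 (p x₀) hx')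
      calc 1 ≤ (t (p x₀)).card := Finset.card_pos.mpr ⟨y, hy⟩
        _ ≤ M δ := ht1 _
    have hsne : s.Nonempty := by
      obtain ⟨ξ, hξ, -⟩ := Set.mem_iUnion₂.mp (hscov hPne.some_mem)
      exact ⟨ξ, hξ⟩
    have hNP1 : 1 ≤ coveringNumber (p '' E) δ := by
      rw [_root_.coveringNumber, ← hscard]
      exact Finset.card_pos.mpr hsne
    have hNE1 : 1 ≤ coveringNumber E δ := by
      have hEsetne : {m : ℕ | ∃ s : Finset (EuclideanSpace ℝ (Fin d)), s.card = m ∧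
          E ⊆ ⋃ x ∈ s, Metric.ball x δ}.Nonempty := ⟨(s.biUnion t).card, s.biUnion t, rfl, hTcov⟩
      obtain ⟨u, hucard, hucov⟩ := Nat.sInf_mem hEsetne
      have : u.Nonempty := by
        obtain ⟨y, hy, -⟩ := Set.mem_iUnion₂.mp (hucov hx₀)
        exact ⟨y, hy⟩
      rw [_root_.coveringNumber, ← hucard]
      exact Finset.card_pos.mpr this
    refine ⟨hNE1, hMδ, hNP1, ?_, hNPle⟩
    calc (coveringNumber E δ : ℝ) ≤ ((s.card * M δ : ℕ) : ℝ) := by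
          exact_mod_cast hNE.trans hTcard
      _ = (M δ : ℝ) * (coveringNumber (p '' E) δ : ℝ) := by
          rw [_root_.coveringNumber, ← hscard]; push_cast; ring
  -- f nonneg eventually, hence cobounded
  have hf0 : ∀ᶠ δ in F, 0 ≤ f δ := by
    filter_upwards [hIoo] with δ hδ
    have hlog : Real.log δ < 0 := Real.log_neg hδ.1 hδ.2
    exact div_nonneg (Real.log_natCast_nonneg _) (by linarith)
  have hcb : Filter.IsCoboundedUnder (· ≤ ·) F f :=
    Filter.isCoboundedUnder_le_of_eventually_le F hf0
  -- g bounded above eventually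
  have hgb : Filter.IsBoundedUnder (· ≤ ·) F g := by
    refine ⟨(n : ℝ) * Real.log C + n, ?_⟩
    rw [Filter.eventually_map]
    filter_upwards [hIoo, hLbig 1] with δ hδ hL
    obtain ⟨-, -, hNP1, -, hNPle⟩ := key δ hδ
    have hLpos : (0:ℝ) < 1 := one_pos
    have hlogNP : Real.log (coveringNumber (p '' E) δ) ≤
        (n : ℝ) * Real.log C + (n : ℝ) * (-Real.log δ) := by
      calc Real.log (coveringNumber (p '' E) δ) ≤ Real.log ((C / δ) ^ n) := by
            apply Real.log_le_log (by exact_mod_cast hNP1) hNPle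
        _ = (n : ℝ) * (Real.log C - Real.log δ) := by
            rw [Real.log_pow, Real.log_div (by linarith) (ne_of_gt hδ.1)]
        _ = (n : ℝ) * Real.log C + (n : ℝ) * (-Real.log δ) := by ring
    have hlogC : 0 ≤ Real.log C := Real.log_nonneg hC1
    rw [hgdef]
    simp only
    rw [div_le_iff₀ (by linarith : (0:ℝ) < -Real.log δ)]
    have hn0 : (0:ℝ) ≤ (n:ℝ) := Nat.cast_nonneg n
    nlinarith [mul_nonneg (mul_nonneg hn0 hlogC) (by linarith : (0:ℝ) ≤ -Real.log δ - 1)]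
  -- main estimate
  have main : ∀ ε > (0:ℝ), ubdim E ≤ ubdim (p '' E) + ε := by
    intro ε hε
    obtain ⟨Cε, hCε, hMb⟩ := hM (ε/3) (by linarith)
    have hev : ∀ᶠ δ in F, f δ ≤ ubdim (p '' E) + ε := by
      have hglt : ∀ᶠ δ in F, g δ < ubdim (p '' E) + ε/3 := by
        apply Filter.eventually_lt_of_limsup_lt _ hgb
        have : ubdim (p '' E) = Filter.limsup g F := rfl
        rw [← this]; linarith
      filter_upwards [hIoo, hLbig (3 * |Real.log Cε| / ε + 1), hglt] with δ hδ hL hg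
      obtain ⟨hNE1, hMδ, hNP1, hNEle, -⟩ := key δ hδ
      have hLpos : (0:ℝ) < -Real.log δ := by
        have h1 : 0 ≤ 3 * |Real.log Cε| / ε := by positivity
        linarith
      have hlogM : Real.log (M δ) ≤ Real.log Cε + (ε/3) * (-Real.log δ) := by
        calc Real.log (M δ) ≤ Real.log (Cε * δ ^ (-(ε/3))) := by
              apply Real.log_le_log (by exact_mod_cast hMδ) (hMb δ hδ)
          _ = Real.log Cε + (-(ε/3)) * Real.log δ := by
              rw [Real.log_mul (ne_of_gt hCε) (ne_of_gt (Real.rpow_pos_of_pos hδ.1 _)),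
                Real.log_rpow hδ.1]
          _ = Real.log Cε + (ε/3) * (-Real.log δ) := by ring
      have hlogNE : Real.log (coveringNumber E δ) ≤
          Real.log (M δ) + Real.log (coveringNumber (p '' E) δ) := by
        calc Real.log (coveringNumber E δ)
            ≤ Real.log ((M δ : ℝ) * (coveringNumber (p '' E) δ : ℝ)) :=
              Real.log_le_log (by exact_mod_cast hNE1) hNEle
          _ = _ := Real.log_mul (Nat.cast_ne_zero.mpr (Nat.one_le_iff_ne_zero.mp hMδ))
              (Nat.cast_ne_zero.mpr (Nat.one_le_iff_ne_zero.mp hNP1))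
      have hfle : f δ ≤ (Real.log Cε + (ε/3) * (-Real.log δ)
          + Real.log (coveringNumber (p '' E) δ)) / (-Real.log δ) := by
        rw [hfdef]
        simp only
        rw [div_le_div_iff₀ hLpos hLpos]
        exact mul_le_mul_of_nonneg_right (by linarith [hlogNE, hlogM]) hLpos.le
      have hLne : -Real.log δ ≠ 0 := ne_of_gt hLpos
      have hsplit : (Real.log Cε + (ε/3) * (-Real.log δ)
          + Real.log (coveringNumber (p '' E) δ)) / (-Real.log δ)
          = Real.log Cε / (-Real.log δ) + ε/3 + g δ := by
        have hlogδne : Real.log δ ≠ 0 := fun h => by rw [h] at hLpos; simp at hLpos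
        rw [hgdef]
        field_simp
        ring
      have hCεL : Real.log Cε / (-Real.log δ) ≤ ε/3 := by
        rw [div_le_iff₀ hLpos]
        have h1 : Real.log Cε ≤ |Real.log Cε| := le_abs_self _
        have h2 : (0:ℝ) ≤ |Real.log Cε| := abs_nonneg _
        have h3 : ε/3 * (3 * |Real.log Cε| / ε + 1) = |Real.log Cε| + ε/3 := by
          field_simp
        nlinarith [mul_le_mul_of_nonneg_left hL (le_of_lt (by linarith : (0:ℝ) < ε/3))]
      rw [hsplit] at hfle
      linarith
    exact Filter.limsup_le_of_le hcb hev
  exact le_of_forall_pos_le_add main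
end

section
/- Let ‖x‖_* = max_{1≤i≤M} |⟨x, v_i⟩| be a polyhedral norm on ℝ^d, E ⊆ ℝ^d, α > 0, and G ⊂ ℝ^d countable. Then there exist k ≤ d and F ⊆ E with packing dimension of F equal to that of E such that: (1) whenever F ∩ ⋂_{ℓ=1}^M C(z_ℓ, v_{i_ℓ}) ≠ ∅ for some z₁,…,z_M ∈ G, the span of {v_{i₁},…,v_{i_M}} has dimension at most k; and (2) there exist z₁,…,z_k ∈ G and v_{i₁},…,v_{i_k} spanning a k-dimensional space with packing dimension of F ∩ ⋂_{ℓ=1}^k C(z_ℓ, v_{i_ℓ}) at least (packing dimension of E) − α. -/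
open Filter Set Metric Bornology

namespace Stmt9Aux

lemma log_natCast_nonneg (n : ℕ) : 0 ≤ Real.log n := by
  cases n with
  | zero => simp
  | succ m => exact Real.log_nonneg (by exact_mod_cast Nat.succ_le_succ (Nat.zero_le m))

lemma ratio_nonneg {X : Type*} [PseudoMetricSpace X] (E : Set X) :
    ∀ᶠ δ in nhdsWithin (0:ℝ) (Set.Ioi 0),
      0 ≤ Real.log (coveringNumber E δ) / (-Real.log δ) := by
  filter_upwards [Ioo_mem_nhdsGT_of_mem (left_mem_Ico.mpr one_pos)] with δ hδ
  have h1 : Real.log δ < 0 := Real.log_neg hδ.1 hδ.2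
  exact div_nonneg (log_natCast_nonneg _) (by linarith)

lemma ubdim_nonneg {X : Type*} [PseudoMetricSpace X] (E : Set X) : 0 ≤ ubdim E := by
  rw [ubdim, Filter.limsup_eq]
  apply Real.sInf_nonneg
  intro a ha
  obtain ⟨δ, h1, h2⟩ := ((ratio_nonneg E).and ha).exists
  linarith

lemma coord_abs_le_norm {d : ℕ} (x : EuclideanSpace ℝ (Fin d)) (j : Fin d) : |x j| ≤ ‖x‖ := by
  rw [EuclideanSpace.norm_eq]
  have h1 : |x j| = Real.sqrt (‖x j‖ ^ 2) := by
    rw [Real.sqrt_sq_eq_abs, Real.norm_eq_abs, abs_abs]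
  rw [h1]
  exact Real.sqrt_le_sqrt (Finset.single_le_sum (f := fun i => ‖x i‖ ^ 2)
    (fun i _ => by positivity) (Finset.mem_univ j))

lemma covering_ball (d : ℕ) (r δ : ℝ) (hr : 0 < r) (hδ0 : 0 < δ) :
    coveringNumber (Metric.ball (0 : EuclideanSpace ℝ (Fin d)) r) δ ≤
      (2 * ⌈r / (δ / (2 * (Real.sqrt d + 1)))⌉₊ + 1) ^ d := by
  classical
  set t : ℝ := δ / (2 * (Real.sqrt d + 1)) with ht
  have hsd : (0:ℝ) ≤ Real.sqrt d := Real.sqrt_nonneg _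
  have htpos : 0 < t := by positivity
  set N : ℕ := ⌈r / t⌉₊ with hN
  set s : Finset (EuclideanSpace ℝ (Fin d)) :=
    (Fintype.piFinset fun _ : Fin d => Finset.Icc (-(N:ℤ)) (N:ℤ)).image
      (fun m => (WithLp.toLp 2 (fun j => t * (m j : ℝ)) : EuclideanSpace ℝ (Fin d))) with hs
  have hcover : Metric.ball (0 : EuclideanSpace ℝ (Fin d)) r ⊆ ⋃ x ∈ s, Metric.ball x δ := by
    intro x hx
    have hxnorm : ‖x‖ < r := by simpa [mem_ball_zero_iff] using hx
    set m : Fin d → ℤ := fun j => ⌊x j / t⌋ with hm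
    have hmem : m ∈ Fintype.piFinset fun _ : Fin d => Finset.Icc (-(N:ℤ)) (N:ℤ) := by
      rw [Fintype.mem_piFinset]
      intro j
      rw [Finset.mem_Icc]
      have hxj : |x j| ≤ ‖x‖ := coord_abs_le_norm x j
      have hrN : r / t ≤ (N:ℝ) := Nat.le_ceil _
      constructor
      · rw [Int.le_floor]
        push_cast
        have h2 : -r ≤ x j := (abs_le.mp (hxj.trans hxnorm.le)).1
        have h3 : -r / t ≤ x j / t := by gcongr
        rw [neg_div] at h3
        linarith
      · have h1 : (⌊x j / t⌋ : ℝ) ≤ (N : ℝ) := by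
          refine (Int.floor_le _).trans ?_
          have h2 : x j ≤ r := (abs_le.mp (hxj.trans hxnorm.le)).2
          have h3 : x j / t ≤ r / t := by gcongr
          linarith
        exact_mod_cast h1
    refine mem_iUnion₂.mpr ⟨_, Finset.mem_image_of_mem _ hmem, ?_⟩
    rw [mem_ball, EuclideanSpace.dist_eq]
    have hcoord : ∀ j : Fin d, dist (x j) (t * (m j : ℝ)) ^ 2 ≤ t ^ 2 := by
      intro j
      have h1 : t * ((m j : ℝ)) ≤ x j := by
        have := Int.floor_le (x j / t)
        calc t * (m j : ℝ) ≤ t * (x j / t) := by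
              apply mul_le_mul_of_nonneg_left this htpos.le
          _ = x j := by field_simp
      have h2 : x j - t * (m j : ℝ) ≤ t := by
        have h3 : x j / t < (m j : ℝ) + 1 := Int.lt_floor_add_one (x j / t)
        have h4 : x j < t * ((m j : ℝ) + 1) := by
          calc x j = t * (x j / t) := by field_simp
            _ < t * ((m j : ℝ) + 1) := by exact mul_lt_mul_of_pos_left h3 htpos
        nlinarith
      rw [Real.dist_eq, abs_of_nonneg (by linarith)]
      nlinarith
    have hsum : ∑ j, dist (x j) (t * (m j : ℝ)) ^ 2 ≤ (d : ℝ) * t ^ 2 := by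
      calc ∑ j, dist (x j) (t * (m j : ℝ)) ^ 2 ≤ ∑ _j : Fin d, t ^ 2 :=
            Finset.sum_le_sum fun j _ => hcoord j
        _ = (d : ℝ) * t ^ 2 := by simp [Finset.card_univ, mul_comm]
    calc Real.sqrt (∑ j, dist (x j) ((fun j => t * (m j : ℝ)) j) ^ 2)
        ≤ Real.sqrt ((d : ℝ) * t ^ 2) := Real.sqrt_le_sqrt hsum
      _ = Real.sqrt d * t := by
          rw [Real.sqrt_mul (by positivity), Real.sqrt_sq htpos.le]
      _ < δ := by
          have h5 : (Real.sqrt d + 1) * t = δ / 2 := by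
            rw [ht]; field_simp
          nlinarith
  have hcard : s.card ≤ (2 * N + 1) ^ d := by
    calc s.card ≤ (Fintype.piFinset fun _ : Fin d => Finset.Icc (-(N:ℤ)) (N:ℤ)).card :=
          Finset.card_image_le
      _ = ∏ _j : Fin d, (Finset.Icc (-(N:ℤ)) (N:ℤ)).card := Fintype.card_piFinset _
      _ = (2 * N + 1) ^ d := by
          simp [Int.card_Icc]
          congr 1
          omega
  exact le_trans (Nat.sInf_le ⟨s, rfl, hcover⟩) hcard

lemma ubdim_ball_le (d : ℕ) (r : ℝ) (hr : 0 < r) :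
    ubdim (Metric.ball (0 : EuclideanSpace ℝ (Fin d)) r) ≤ d := by
  rw [ubdim, Filter.limsup_eq]
  have hbdd : BddBelow {a : ℝ | ∀ᶠ δ in nhdsWithin (0:ℝ) (Set.Ioi 0),
      Real.log (coveringNumber (Metric.ball (0 : EuclideanSpace ℝ (Fin d)) r) δ) /
        (-Real.log δ) ≤ a} := by
    refine ⟨0, fun a ha => ?_⟩
    obtain ⟨δ, h1, h2⟩ :=
      ((ratio_nonneg (Metric.ball (0 : EuclideanSpace ℝ (Fin d)) r)).and ha).exists
    linarith
  refine le_of_forall_pos_le_add fun ε hε => csInf_le hbdd ?_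
  set C : ℝ := 4 * r * (Real.sqrt d + 1) + 3 with hC
  have hsd : (0:ℝ) ≤ Real.sqrt d := Real.sqrt_nonneg _
  have hC3 : 3 ≤ C := by nlinarith
  have hlogC : 0 ≤ Real.log C := Real.log_nonneg (by linarith)
  have htend : Tendsto (fun δ : ℝ => (d:ℝ) + (d:ℝ) * Real.log C / (-Real.log δ))
      (nhdsWithin (0:ℝ) (Set.Ioi 0)) (nhds ((d:ℝ) + 0)) := by
    apply Tendsto.const_add
    exact Tendsto.div_atTop tendsto_const_nhds
      (tendsto_neg_atBot_atTop.comp Real.tendsto_log_nhdsGT_zero)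
  have hev : ∀ᶠ δ in nhdsWithin (0:ℝ) (Set.Ioi 0),
      (d:ℝ) + (d:ℝ) * Real.log C / (-Real.log δ) < (d:ℝ) + ε :=
    htend.eventually_lt_const (by simpa using hε)
  filter_upwards [hev, Ioo_mem_nhdsGT_of_mem (left_mem_Ico.mpr one_pos)] with δ hδ1 hδmem
  obtain ⟨hδ0, hδlt1⟩ := hδmem
  have hlogδ : Real.log δ < 0 := Real.log_neg hδ0 hδlt1
  have hlogpos : 0 < -Real.log δ := by linarith
  set n : ℕ := coveringNumber (Metric.ball (0 : EuclideanSpace ℝ (Fin d)) r) δ with hn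
  set t : ℝ := δ / (2 * (Real.sqrt d + 1)) with htdef
  have htpos : 0 < t := by positivity
  set N : ℕ := ⌈r / t⌉₊ with hNdef
  have hcov : n ≤ (2 * N + 1) ^ d := covering_ball d r δ hr hδ0
  -- bound 2N+1 ≤ C / δ
  have hNlt : (N : ℝ) < r / t + 1 := Nat.ceil_lt_add_one (by positivity)
  have hbound : (2 * N + 1 : ℝ) ≤ C / δ := by
    have h1 : r / t = 2 * r * (Real.sqrt d + 1) / δ := by
      rw [htdef]; field_simp
    have h2 : (2 * N + 1 : ℝ) < 2 * (r / t) + 3 := by linarith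
    have h3 : 2 * (r / t) + 3 ≤ C / δ := by
      rw [h1, hC]
      have h4 : (3:ℝ) ≤ 3 / δ := by
        rw [le_div_iff₀ hδ0]; nlinarith
      have h5 : (4 * r * (Real.sqrt d + 1) + 3) / δ
          = 4 * r * (Real.sqrt d + 1) / δ + 3 / δ := by ring
      have h6 : 2 * (2 * r * (Real.sqrt d + 1) / δ) = 4 * r * (Real.sqrt d + 1) / δ := by ring
      rw [h5, h6]
      linarith
    linarith
  -- log bound
  have hlogn : Real.log n ≤ (d:ℝ) * (Real.log C - Real.log δ) := by
    have h0 : Real.log n ≤ Real.log ((2 * N + 1 : ℝ) ^ d) := by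
      rcases Nat.eq_zero_or_pos n with h | h
      · rw [h]
        push_cast
        exact le_trans (by simp) (Real.log_nonneg (one_le_pow₀ (by push_cast; linarith)))
      · apply Real.log_le_log (by exact_mod_cast h)
        exact_mod_cast hcov
    have h1 : Real.log ((2 * N + 1 : ℝ) ^ d) = (d:ℝ) * Real.log (2 * N + 1 : ℝ) := by
      rw [Real.log_pow]
    have h2 : Real.log (2 * N + 1 : ℝ) ≤ Real.log (C / δ) :=
      Real.log_le_log (by positivity) hbound
    have h3 : Real.log (C / δ) = Real.log C - Real.log δ :=
      Real.log_div (by linarith) (ne_of_gt hδ0)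
    calc Real.log n ≤ Real.log ((2 * N + 1 : ℝ) ^ d) := h0
      _ = (d:ℝ) * Real.log (2 * N + 1 : ℝ) := h1
      _ ≤ (d:ℝ) * (Real.log C - Real.log δ) := by
          apply mul_le_mul_of_nonneg_left _ (Nat.cast_nonneg d)
          rw [← h3]; exact h2
  have hdiv : Real.log n / (-Real.log δ) ≤
      (d:ℝ) * (Real.log C - Real.log δ) / (-Real.log δ) := by gcongr
  have heq : (d:ℝ) * (Real.log C - Real.log δ) / (-Real.log δ) =
      (d:ℝ) + (d:ℝ) * Real.log C / (-Real.log δ) := by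
    have hne : Real.log δ ≠ 0 := ne_of_lt hlogδ
    field_simp
    ring
  calc Real.log n / (-Real.log δ) ≤ (d:ℝ) + (d:ℝ) * Real.log C / (-Real.log δ) := by
        rw [← heq]; exact hdiv
    _ ≤ (d:ℝ) + ε := le_of_lt hδ1

lemma exists_cover (d : ℕ) (E : Set (EuclideanSpace ℝ (Fin d))) :
    ∃ C : ℕ → Set (EuclideanSpace ℝ (Fin d)), (E ⊆ ⋃ i, C i) ∧ (∀ i, IsBounded (C i)) ∧
      ∀ i, ubdim (C i) ≤ (d:ℝ) := by
  refine ⟨fun n => Metric.ball 0 (n + 1), ?_, fun n => isBounded_ball,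
    fun n => ubdim_ball_le d _ (by positivity)⟩
  intro x _
  obtain ⟨n, hn⟩ := exists_nat_gt ‖x‖
  exact mem_iUnion.mpr ⟨n, mem_ball_zero_iff.mpr (by push_cast; linarith)⟩

lemma pdim_bddBelow {X : Type*} [PseudoMetricSpace X] (E : Set X) :
    BddBelow {a : ℝ | ∃ C : ℕ → Set X, (E ⊆ ⋃ i, C i) ∧ (∀ i, IsBounded (C i)) ∧
      ∀ i, ubdim (C i) ≤ a} := by
  refine ⟨0, ?_⟩
  rintro a ⟨C, -, -, hC⟩
  exact le_trans (ubdim_nonneg (C 0)) (hC 0)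

lemma pdim_mono {d : ℕ} {A B : Set (EuclideanSpace ℝ (Fin d))} (h : A ⊆ B) :
    pdim A ≤ pdim B := by
  apply csInf_le_csInf (pdim_bddBelow A)
  · obtain ⟨C, h1, h2, h3⟩ := exists_cover d B
    exact ⟨d, C, h1, h2, h3⟩
  · rintro a ⟨C, h1, h2, h3⟩
    exact ⟨C, h.trans h1, h2, h3⟩

lemma pdim_iUnion_le {d : ℕ} (B : ℕ → Set (EuclideanSpace ℝ (Fin d))) (a : ℝ)
    (h : ∀ n, pdim (B n) ≤ a) : pdim (⋃ n, B n) ≤ a := by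
  refine le_of_forall_pos_le_add fun ε hε => ?_
  have h2 : ∀ n, ∃ C : ℕ → Set (EuclideanSpace ℝ (Fin d)), (B n ⊆ ⋃ i, C i) ∧
      (∀ i, IsBounded (C i)) ∧ ∀ i, ubdim (C i) ≤ a + ε := by
    intro n
    have hne : {b : ℝ | ∃ C : ℕ → Set (EuclideanSpace ℝ (Fin d)), (B n ⊆ ⋃ i, C i) ∧
        (∀ i, IsBounded (C i)) ∧ ∀ i, ubdim (C i) ≤ b}.Nonempty := by
      obtain ⟨C, h1, h2, h3⟩ := exists_cover d (B n)
      exact ⟨d, C, h1, h2, h3⟩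
    have hlt : pdim (B n) < a + ε := lt_of_le_of_lt (h n) (by linarith)
    rw [pdim] at hlt
    obtain ⟨b, ⟨C, hb1, hb2, hb3⟩, hba⟩ := (csInf_lt_iff (pdim_bddBelow (B n)) hne).mp hlt
    exact ⟨C, hb1, hb2, fun i => (hb3 i).trans hba.le⟩
  choose C hC1 hC2 hC3 using h2
  apply csInf_le (pdim_bddBelow _)
  refine ⟨fun m => C m.unpair.1 m.unpair.2, ?_, fun m => hC2 _ _, fun m => hC3 _ _⟩
  intro x hx
  obtain ⟨n, hn⟩ := mem_iUnion.mp hx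
  obtain ⟨i, hi⟩ := mem_iUnion.mp (hC1 n hn)
  exact mem_iUnion.mpr ⟨Nat.pair n i, by simpa [Nat.unpair_pair] using hi⟩

lemma extract {d M k : ℕ} (w : Fin M → EuclideanSpace ℝ (Fin d))
    (hk : Module.finrank ℝ ↥(Submodule.span ℝ (Set.range w)) = k) :
    ∃ j : Fin k → Fin M,
      Submodule.span ℝ (Set.range (w ∘ j)) = Submodule.span ℝ (Set.range w) := by
  classical
  obtain ⟨t, hts, hspan, hli⟩ := exists_linearIndependent ℝ (Set.range w)
  have htf : t.Finite := hli.setFinite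
  haveI := htf.fintype
  have hcard : Fintype.card t = k := by
    rw [← Set.toFinset_card, ← finrank_span_set_eq_card hli, hspan, hk]
  let e : Fin k ≃ t := (Fintype.equivFinOfCardEq hcard).symm
  have hsel : ∀ u : t, ∃ ℓ, w ℓ = (u : EuclideanSpace ℝ (Fin d)) := fun u => hts u.2
  choose g hg using hsel
  refine ⟨fun ℓ => g (e ℓ), ?_⟩
  have hrange : Set.range (w ∘ fun ℓ => g (e ℓ)) = t := by
    ext u
    constructor
    · rintro ⟨ℓ, rfl⟩
      simpa [Function.comp, hg] using (e ℓ).2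
    · intro hu
      exact ⟨e.symm ⟨u, hu⟩, by simp [Function.comp, hg]⟩
  rw [hrange, hspan]

end Stmt9Aux

open Stmt9Aux in
theorem stmt9 {d M : ℕ} (v : Fin M → EuclideanSpace ℝ (Fin d))
    (hspan : Submodule.span ℝ (Set.range v) = ⊤)
    (ν : EuclideanSpace ℝ (Fin d) → ℝ)
    (hν : ∀ x, ν x = ⨆ i, |(inner ℝ x (v i) : ℝ)|)
    (E : Set (EuclideanSpace ℝ (Fin d))) (α : ℝ) (hα : 0 < α)
    (G : Set (EuclideanSpace ℝ (Fin d))) (hG : G.Countable) :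
    ∃ k ≤ d, ∃ F ⊆ E, pdim F = pdim E ∧
      (∀ z : Fin M → EuclideanSpace ℝ (Fin d), (∀ ℓ, z ℓ ∈ G) →
        ∀ i : Fin M → Fin M,
          (F ∩ ⋂ ℓ, {y | ν (z ℓ - y) = |(inner ℝ (z ℓ - y) (v (i ℓ)) : ℝ)|}).Nonempty →
          Module.finrank ℝ ↥(Submodule.span ℝ (Set.range fun ℓ => v (i ℓ))) ≤ k) ∧
      (∃ z : Fin k → EuclideanSpace ℝ (Fin d), (∀ ℓ, z ℓ ∈ G) ∧
        ∃ i : Fin k → Fin M,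
          Module.finrank ℝ ↥(Submodule.span ℝ (Set.range fun ℓ => v (i ℓ))) = k ∧
          pdim E - α ≤
            pdim (F ∩ ⋂ ℓ, {y | ν (z ℓ - y) = |(inner ℝ (z ℓ - y) (v (i ℓ)) : ℝ)|})) := by
  classical
  have hQ : ∃ k : ℕ, ∃ F, F ⊆ E ∧ pdim F = pdim E ∧
      (∀ z : Fin M → EuclideanSpace ℝ (Fin d), (∀ ℓ, z ℓ ∈ G) → ∀ i : Fin M → Fin M,
        (F ∩ ⋂ ℓ, {y | ν (z ℓ - y) = |(inner ℝ (z ℓ - y) (v (i ℓ)) : ℝ)|}).Nonempty →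
        Module.finrank ℝ ↥(Submodule.span ℝ (Set.range fun ℓ => v (i ℓ))) ≤ k) :=
    ⟨d, E, Set.Subset.rfl, rfl, fun z _ i _ =>
      le_trans (Submodule.finrank_le _) (le_of_eq finrank_euclideanSpace_fin)⟩
  set k := Nat.find hQ with hkdef
  obtain ⟨F, hFE, hFp, hF1⟩ := Nat.find_spec hQ
  have hkd : k ≤ d := Nat.find_min' hQ
    ⟨E, Set.Subset.rfl, rfl, fun z _ i _ =>
      le_trans (Submodule.finrank_le _) (le_of_eq finrank_euclideanSpace_fin)⟩
  refine ⟨k, hkd, F, hFE, hFp, hF1, ?_⟩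
  rcases Nat.eq_zero_or_pos k with hk0 | hkpos
  · haveI : IsEmpty (Fin k) := by rw [hk0]; infer_instance
    refine ⟨fun ℓ => isEmptyElim ℓ, fun ℓ => isEmptyElim ℓ, fun ℓ => isEmptyElim ℓ, ?_, ?_⟩
    · rw [Set.range_eq_empty, Submodule.span_empty, hk0, finrank_bot]
    · rw [Set.iInter_of_empty, Set.inter_univ, hFp]
      linarith
  · by_contra hcon
    push_neg at hcon
    set T : Set ((Fin k → EuclideanSpace ℝ (Fin d)) × (Fin k → Fin M)) :=
      {p | (∀ ℓ, p.1 ℓ ∈ G) ∧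
        Module.finrank ℝ ↥(Submodule.span ℝ (Set.range fun ℓ => v (p.2 ℓ))) = k} with hT
    have hTc : T.Countable := by
      apply Set.Countable.mono ?_
        ((Set.countable_univ_pi fun _ : Fin k => hG).prod Set.countable_univ)
      intro p hp
      exact ⟨Set.mem_univ_pi.mpr hp.1, Set.mem_univ _⟩
    have hP : ∃ F₂, F₂ ⊆ E ∧ pdim F₂ = pdim E ∧
        (∀ z : Fin M → EuclideanSpace ℝ (Fin d), (∀ ℓ, z ℓ ∈ G) → ∀ i : Fin M → Fin M,
          (F₂ ∩ ⋂ ℓ, {y | ν (z ℓ - y) = |(inner ℝ (z ℓ - y) (v (i ℓ)) : ℝ)|}).Nonempty →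
          Module.finrank ℝ ↥(Submodule.span ℝ (Set.range fun ℓ => v (i ℓ))) ≤ k - 1) := by
      rcases Set.eq_empty_or_nonempty T with hTe | hTne
      · refine ⟨F, hFE, hFp, ?_⟩
        intro z hz i hne2
        have hle := hF1 z hz i hne2
        by_contra hgt
        push_neg at hgt
        have heq : Module.finrank ℝ ↥(Submodule.span ℝ (Set.range fun ℓ => v (i ℓ))) = k := by
          omega
        obtain ⟨j, hj⟩ := extract (fun ℓ => v (i ℓ)) heq
        have hmem : ((fun ℓ => z (j ℓ)), (fun ℓ => i (j ℓ))) ∈ T := by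
          refine ⟨fun ℓ => hz (j ℓ), ?_⟩
          show Module.finrank ℝ ↥(Submodule.span ℝ (Set.range fun ℓ => v (i (j ℓ)))) = k
          have hj' : Submodule.span ℝ (Set.range fun ℓ => v (i (j ℓ)))
              = Submodule.span ℝ (Set.range fun ℓ => v (i ℓ)) := hj
          rw [hj']
          exact heq
        rw [hTe] at hmem
        exact hmem
      · obtain ⟨f, hf⟩ := hTc.exists_eq_range hTne
        have hbadlt : ∀ n, pdim (F ∩ ⋂ ℓ, {y |
            ν ((f n).1 ℓ - y) = |(inner ℝ ((f n).1 ℓ - y) (v ((f n).2 ℓ)) : ℝ)|}) < pdim E - α := by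
          intro n
          have hfn : f n ∈ T := hf ▸ Set.mem_range_self n
          exact hcon (f n).1 hfn.1 (f n).2 hfn.2
        set F₂ : Set (EuclideanSpace ℝ (Fin d)) := F \ ⋃ n, ⋂ ℓ, {y |
            ν ((f n).1 ℓ - y) = |(inner ℝ ((f n).1 ℓ - y) (v ((f n).2 ℓ)) : ℝ)|} with hF₂
        have hF₂E : F₂ ⊆ E := Set.diff_subset.trans hFE
        have hF₂le : pdim F₂ ≤ pdim E := by
          rw [← hFp]; exact pdim_mono Set.diff_subset
        set B : ℕ → Set (EuclideanSpace ℝ (Fin d)) := fun m => Nat.casesOn m F₂ fun n =>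
          F ∩ ⋂ ℓ, {y |
            ν ((f n).1 ℓ - y) = |(inner ℝ ((f n).1 ℓ - y) (v ((f n).2 ℓ)) : ℝ)|} with hB
        have hcover : F ⊆ ⋃ m, B m := by
          intro x hxF
          by_cases hx : x ∈ ⋃ n, ⋂ ℓ, {y |
              ν ((f n).1 ℓ - y) = |(inner ℝ ((f n).1 ℓ - y) (v ((f n).2 ℓ)) : ℝ)|}
          · obtain ⟨n, hn⟩ := Set.mem_iUnion.mp hx
            exact Set.mem_iUnion.mpr ⟨n + 1, ⟨hxF, hn⟩⟩
          · exact Set.mem_iUnion.mpr ⟨0, ⟨hxF, hx⟩⟩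
        have hBle : ∀ m, pdim (B m) ≤ max (pdim F₂) (pdim E - α) := by
          intro m
          cases m with
          | zero => exact le_max_left _ _
          | succ n => exact le_trans (hbadlt n).le (le_max_right _ _)
        have hFle : pdim E ≤ max (pdim F₂) (pdim E - α) := by
          calc pdim E = pdim F := hFp.symm
            _ ≤ pdim (⋃ m, B m) := pdim_mono hcover
            _ ≤ _ := pdim_iUnion_le B _ hBle
        have hF₂eq : pdim F₂ = pdim E := by
          rcases le_max_iff.mp hFle with h | h
          · exact le_antisymm hF₂le h
          · linarith
        refine ⟨F₂, hF₂E, hF₂eq, ?_⟩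
        intro z hz i hne2
        obtain ⟨y, hyF₂, hyA⟩ := hne2
        have hle := hF1 z hz i ⟨y, hyF₂.1, hyA⟩
        by_contra hgt
        push_neg at hgt
        have heq : Module.finrank ℝ ↥(Submodule.span ℝ (Set.range fun ℓ => v (i ℓ))) = k := by
          omega
        obtain ⟨j, hj⟩ := extract (fun ℓ => v (i ℓ)) heq
        have hmem : ((fun ℓ => z (j ℓ)), (fun ℓ => i (j ℓ))) ∈ T := by
          refine ⟨fun ℓ => hz (j ℓ), ?_⟩
          show Module.finrank ℝ ↥(Submodule.span ℝ (Set.range fun ℓ => v (i (j ℓ)))) = k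
          have hj' : Submodule.span ℝ (Set.range fun ℓ => v (i (j ℓ)))
              = Submodule.span ℝ (Set.range fun ℓ => v (i ℓ)) := hj
          rw [hj']
          exact heq
        rw [hf] at hmem
        obtain ⟨n, hn⟩ := hmem
        apply hyF₂.2
        refine Set.mem_iUnion.mpr ⟨n, ?_⟩
        rw [hn]
        exact Set.mem_iInter.mpr fun ℓ => Set.mem_iInter.mp hyA (j ℓ)
    obtain ⟨F₂, h1, h2, h3⟩ := hP
    have hfind : k ≤ k - 1 := Nat.find_min' hQ ⟨F₂, h1, h2, h3⟩
    omega
end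

section
/- Let X = (ℝ^d, ‖·‖_*) be a normed space whose norm is differentiable at z ≠ 0, with gradient ∇‖z‖_* taken with respect to the Euclidean structure. Then ⟨z, ∇‖z‖_*⟩ = ‖z‖_*, and there exists η = η(d, ‖·‖_*) ∈ (0,1) such that z lies in the cone X(0, span(∇‖z‖_*), η) = {x : ‖P_{W^⊥} x‖ < η‖x‖} where W = span(∇‖z‖_*). -/
open Filter Set Metric Bornology

/-- `ν` is a norm on `ℝ^d`. -/
structure IsNorm {d : ℕ} (ν : EuclideanSpace ℝ (Fin d) → ℝ) : Prop where
  eq_zero_iff : ∀ x, ν x = 0 ↔ x = 0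
  smul_eq : ∀ (c : ℝ) (x), ν (c • x) = |c| * ν x
  add_le : ∀ x y, ν (x + y) ≤ ν x + ν y

set_option maxHeartbeats 1000000 in
theorem stmt12 {d : ℕ} (ν : EuclideanSpace ℝ (Fin d) → ℝ) (hν : IsNorm ν)
    (grad : EuclideanSpace ℝ (Fin d) → EuclideanSpace ℝ (Fin d))
    (hgrad : ∀ z, z ≠ 0 → HasGradientAt ν (grad z) z) :
    (∀ z, z ≠ 0 → (inner ℝ z (grad z) : ℝ) = ν z) ∧
    ∃ η ∈ Set.Ioo (0:ℝ) 1, ∀ z, z ≠ 0 →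
      ‖(Submodule.orthogonalProjectionOnto (Submodule.span ℝ {grad z})ᗮ z : EuclideanSpace ℝ (Fin d))‖ <
        η * ‖z‖ := by
  classical
  have hν0 : ν 0 = 0 := (hν.eq_zero_iff 0).mpr rfl
  have hνneg : ∀ x, ν (-x) = ν x := by
    intro x
    have h := hν.smul_eq (-1) x
    simpa using h
  have hνnn : ∀ x, 0 ≤ ν x := by
    intro x
    have h := hν.add_le x (-x)
    rw [add_neg_cancel, hν0, hνneg] at h
    linarith
  -- Euler identity
  have euler : ∀ z, z ≠ 0 → (inner ℝ z (grad z) : ℝ) = ν z := by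
    intro z hz
    have hf : HasFDerivAt ν (InnerProductSpace.toDual ℝ _ (grad z)) z :=
      (hgrad z hz).hasFDerivAt
    have h1 : HasDerivAt (fun t : ℝ => t • z) z 1 := by
      simpa using (hasDerivAt_id (1:ℝ)).smul_const z
    have hd : HasDerivAt (fun t : ℝ => ν (t • z)) (inner ℝ (grad z) z) 1 := by
      have hf' : HasFDerivAt ν (InnerProductSpace.toDual ℝ _ (grad z)) ((1:ℝ) • z) := by
        simpa using hf
      have := hf'.comp_hasDerivAt 1 h1
      simp only [InnerProductSpace.toDual_apply_apply] at this
      exact this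
    have hd2 : HasDerivAt (fun t : ℝ => ν (t • z)) (ν z) 1 := by
      have h : HasDerivAt (fun t : ℝ => t * ν z) (ν z) 1 := by
        simpa using (hasDerivAt_id (1:ℝ)).mul_const (ν z)
      refine h.congr_of_eventuallyEq ?_
      filter_upwards [eventually_gt_nhds (show (0:ℝ) < 1 by norm_num)] with t ht
      rw [hν.smul_eq, abs_of_pos ht]
    rw [real_inner_comm]
    exact hd.unique hd2
  refine ⟨euler, ?_⟩
  by_cases hd : d = 0
  · refine ⟨1/2, ⟨by norm_num, by norm_num⟩, fun z hz => ?_⟩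
    exfalso
    apply hz
    subst hd
    ext i
    exact i.elim0
  -- Now d ≥ 1.
  -- subadditivity over sums
  have sum_le : ∀ (s : Finset (Fin d)) (f : Fin d → EuclideanSpace ℝ (Fin d)),
      ν (∑ i ∈ s, f i) ≤ ∑ i ∈ s, ν (f i) := by
    intro s f
    induction s using Finset.induction with
    | empty => simp [hν0]
    | insert _ _ h ih =>
      rw [Finset.sum_insert h, Finset.sum_insert h]
      exact le_trans (hν.add_le _ _) (by linarith)
  have hx_sum : ∀ x : EuclideanSpace ℝ (Fin d),
      x = ∑ i, x i • EuclideanSpace.single i (1:ℝ) := by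
    intro x
    have h := (EuclideanSpace.basisFun (Fin d) ℝ).sum_repr x
    simp only [EuclideanSpace.basisFun_apply, EuclideanSpace.basisFun_repr] at h
    exact h.symm
  have coord : ∀ (x : EuclideanSpace ℝ (Fin d)) (j : Fin d), |x j| ≤ ‖x‖ := by
    intro x j
    have h := abs_real_inner_le_norm (EuclideanSpace.single j (1:ℝ)) x
    simpa [EuclideanSpace.inner_single_left, EuclideanSpace.norm_single] using h
  set L : ℝ := ∑ i, ν (EuclideanSpace.single i (1:ℝ)) with hL
  have hLnn : 0 ≤ L := Finset.sum_nonneg fun i _ => hνnn _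
  have hub : ∀ x, ν x ≤ L * ‖x‖ := by
    intro x
    calc ν x = ν (∑ i, x i • EuclideanSpace.single i (1:ℝ)) := by rw [← hx_sum]
      _ ≤ ∑ i, ν (x i • EuclideanSpace.single i (1:ℝ)) := sum_le _ _
      _ = ∑ i, |x i| * ν (EuclideanSpace.single i (1:ℝ)) := by
          simp [hν.smul_eq]
      _ ≤ ∑ i, ‖x‖ * ν (EuclideanSpace.single i (1:ℝ)) :=
          Finset.sum_le_sum fun i _ =>
            mul_le_mul_of_nonneg_right (coord x i) (hνnn _)
      _ = L * ‖x‖ := by rw [← Finset.mul_sum, mul_comm]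
  have hLip : LipschitzWith L.toNNReal ν := by
    apply LipschitzWith.of_dist_le_mul
    intro x y
    rw [Real.coe_toNNReal L hLnn, Real.dist_eq, dist_eq_norm]
    rw [abs_sub_le_iff]
    constructor
    · have h := hν.add_le y (x - y)
      simp only [add_sub_cancel] at h
      linarith [hub (x - y)]
    · have h := hν.add_le x (y - x)
      simp only [add_sub_cancel] at h
      have hxy : ν (y - x) = ν (x - y) := by rw [← hνneg (x - y), neg_sub]
      rw [hxy] at h
      linarith [hub (x - y)]
  have hgb : ∀ z, z ≠ 0 → ‖grad z‖ ≤ L := by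
    intro z hz
    have h := ((hgrad z hz).hasFDerivAt).le_of_lipschitz hLip
    rw [Real.coe_toNNReal L hLnn] at h
    calc ‖grad z‖ = ‖InnerProductSpace.toDual ℝ (EuclideanSpace ℝ (Fin d)) (grad z)‖ :=
          (LinearIsometryEquiv.norm_map _ _).symm
      _ ≤ L := h
  -- lower bound via compactness of the sphere
  have hd1 : 0 < d := Nat.pos_of_ne_zero hd
  have hSne : (sphere (0 : EuclideanSpace ℝ (Fin d)) 1).Nonempty := by
    refine ⟨EuclideanSpace.single ⟨0, hd1⟩ (1:ℝ), ?_⟩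
    simp [mem_sphere_iff_norm, EuclideanSpace.norm_single]
  obtain ⟨x₀, hx₀S, hmin⟩ :=
    (isCompact_sphere (0 : EuclideanSpace ℝ (Fin d)) 1).exists_isMinOn hSne
      hLip.continuous.continuousOn
  set c : ℝ := ν x₀ with hc
  have hx₀norm : ‖x₀‖ = 1 := by simpa [mem_sphere_iff_norm] using hx₀S
  have hx₀ne : x₀ ≠ 0 := by
    intro h; rw [h, norm_zero] at hx₀norm; norm_num at hx₀norm
  have hcpos : 0 < c := by
    rcases lt_or_eq_of_le (hνnn x₀) with h | h
    · exact h
    · exact absurd ((hν.eq_zero_iff x₀).mp h.symm) hx₀ne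
  have hlow : ∀ z : EuclideanSpace ℝ (Fin d), z ≠ 0 → c * ‖z‖ ≤ ν z := by
    intro z hz
    have hzn : ‖z‖ ≠ 0 := norm_ne_zero_iff.mpr hz
    set u : EuclideanSpace ℝ (Fin d) := ‖z‖⁻¹ • z with hu
    have hun : ‖u‖ = 1 := by
      rw [hu, norm_smul, norm_inv, norm_norm, inv_mul_cancel₀ hzn]
    have huS : u ∈ sphere (0 : EuclideanSpace ℝ (Fin d)) 1 := by
      simpa [mem_sphere_iff_norm] using hun
    have hcu : c ≤ ν u := hmin huS
    have hzu : z = ‖z‖ • u := by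
      rw [hu, smul_smul, mul_inv_cancel₀ hzn, one_smul]
    have h5 : ν z = |‖z‖| * ν u := by
      have h6 := hν.smul_eq ‖z‖ u
      rw [← hzu] at h6
      exact h6
    rw [h5, abs_of_nonneg (norm_nonneg z)]
    nlinarith [norm_nonneg z]
  have hcL : c ≤ L := by
    have := hub x₀
    rw [hx₀norm, mul_one] at this
    exact this
  have hLpos : 0 < L := lt_of_lt_of_le hcpos hcL
  -- choose η
  set A : ℝ := c ^ 2 / (2 * L ^ 2) with hA
  have hApos : 0 < A := by positivity
  have hAlt : A < 1 := by
    rw [hA, div_lt_one (by positivity)]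
    nlinarith
  refine ⟨Real.sqrt (1 - A), ⟨Real.sqrt_pos.mpr (by linarith), ?_⟩, ?_⟩
  · have := Real.sqrt_lt_sqrt (by linarith) (show 1 - A < 1 by linarith)
    simpa using this
  intro z hz
  set g : EuclideanSpace ℝ (Fin d) := grad z with hg
  have hνz : (0:ℝ) < ν z := by
    rcases lt_or_eq_of_le (hνnn z) with h | h
    · exact h
    · exact absurd ((hν.eq_zero_iff z).mp h.symm) hz
  have hinner : (inner ℝ g z : ℝ) = ν z := by
    rw [real_inner_comm]; exact euler z hz
  have hgne : g ≠ 0 := by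
    intro h
    rw [h, inner_zero_left] at hinner
    linarith
  have hgnorm : 0 < ‖g‖ := norm_pos_iff.mpr hgne
  have hspan : Submodule.span ℝ {g} = (ℝ ∙ g) := rfl
  have hproj : (Submodule.orthogonalProjectionOnto (ℝ ∙ g) z : EuclideanSpace ℝ (Fin d)) =
      ((inner ℝ g z : ℝ) / (‖g‖ ^ 2)) • g := by
    rw [← Submodule.starProjection_apply]
    simpa using Submodule.starProjection_singleton ℝ z
  have hprojnorm : ‖(Submodule.orthogonalProjectionOnto (ℝ ∙ g) z : EuclideanSpace ℝ (Fin d))‖ = ν z / ‖g‖ := by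
    rw [hproj, norm_smul, hinner]
    rw [Real.norm_eq_abs, abs_div, abs_of_pos hνz, abs_of_pos (by positivity : (0:ℝ) < ‖g‖ ^ 2)]
    field_simp
  have hpyth := Submodule.norm_sq_eq_add_norm_sq_projection z (ℝ ∙ g)
  have hPKnorm : ‖Submodule.orthogonalProjectionOnto (ℝ ∙ g) z‖ = ν z / ‖g‖ := by
    rw [← hprojnorm]; simp
  have hPortho : ‖Submodule.orthogonalProjectionOnto (ℝ ∙ g)ᗮ z‖ ^ 2 = ‖z‖ ^ 2 - (ν z / ‖g‖) ^ 2 := by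
    rw [hPKnorm] at hpyth; linarith
  have hzpos : 0 < ‖z‖ := norm_pos_iff.mpr hz
  have hratio : c * ‖z‖ / L ≤ ν z / ‖g‖ :=
    div_le_div₀ (le_of_lt hνz) (hlow z hz) hgnorm (hgb z hz)
  have hratio_pos : 0 < c * ‖z‖ / L := by positivity
  have hsq : ‖Submodule.orthogonalProjectionOnto (ℝ ∙ g)ᗮ z‖ ^ 2 < (Real.sqrt (1 - A) * ‖z‖) ^ 2 := by
    rw [hPortho, mul_pow, Real.sq_sqrt (by linarith : (0:ℝ) ≤ 1 - A)]
    have h1 : (c * ‖z‖ / L) ^ 2 ≤ (ν z / ‖g‖) ^ 2 := by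
      apply sq_le_sq' <;> nlinarith
    have h2 : (c * ‖z‖ / L) ^ 2 = (c^2 / L^2) * ‖z‖^2 := by
      field_simp
    rw [hA]
    rw [h2] at h1
    have hc2 : c^2 / (2 * L^2) < c^2 / L^2 := by
      apply div_lt_div_of_pos_left (by positivity) (by positivity)
      nlinarith
    have h3 : c^2/(2*L^2) * ‖z‖^2 < c^2/L^2 * ‖z‖^2 :=
      mul_lt_mul_of_pos_right hc2 (by positivity)
    nlinarith
  have hfinal : ‖(Submodule.orthogonalProjectionOnto (ℝ ∙ g)ᗮ z : EuclideanSpace ℝ (Fin d))‖ <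
      Real.sqrt (1 - A) * ‖z‖ := by
    have hnn : 0 ≤ Real.sqrt (1 - A) * ‖z‖ := by positivity
    have : ‖(Submodule.orthogonalProjectionOnto (ℝ ∙ g)ᗮ z : EuclideanSpace ℝ (Fin d))‖ ^ 2 <
        (Real.sqrt (1 - A) * ‖z‖) ^ 2 := by
      simpa using hsq
    exact lt_of_pow_lt_pow_left₀ 2 hnn this
  exact hfinal
end

section
/- Let ‖·‖_* be a C¹ norm on ℝ^d, E ⊆ ℝ^d, α > 0, and G ⊂ ℝ^d a countable set. Suppose that for every L > 0, every choice z₁,…,z_k ∈ G, and every subset F' ⊆ E with packing dimension at least (packing dimension of E) − α, there exists x ∈ F' with |det-volume of (∇p_{z₁}(x), …, ∇p_{z_k}(x))| < L (i.e., E is not (α,k)-transversal with respect to G). Then there exists F ⊆ E with packing dimension of F equal to that of E such that the k vectors ∇p_{z₁}(x), …, ∇p_{z_k}(x) are linearly dependent for every choice z₁,…,z_k ∈ G and every x ∈ F. -/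
open Filter Set Metric Bornology

/-- `k`-dimensional volume of the parallelepiped spanned by `u 1, …, u k`,
computed as the square root of the Gram determinant. -/
noncomputable def gramVol {d k : ℕ} (u : Fin k → EuclideanSpace ℝ (Fin d)) : ℝ :=
  Real.sqrt (Matrix.det (Matrix.of fun i j => (inner ℝ (u i) (u j) : ℝ)))

open Topology

lemma aux_f_nonneg {X : Type*} [PseudoMetricSpace X] (E : Set X) :
    ∀ᶠ δ : ℝ in 𝓝[>] 0, 0 ≤ Real.log (coveringNumber E δ) / (-Real.log δ) := by
  filter_upwards [Ioo_mem_nhdsGT (zero_lt_one : (0:ℝ) < 1)] with δ hδ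
  exact div_nonneg (Real.log_natCast_nonneg _) (by
    have := Real.log_neg hδ.1 hδ.2; linarith)

lemma ubdim_nonneg {X : Type*} [PseudoMetricSpace X] (E : Set X) : 0 ≤ ubdim E := by
  rw [ubdim, Filter.limsup_eq]
  apply Real.sInf_nonneg
  intro a ha
  rw [Set.mem_setOf_eq] at ha
  obtain ⟨δ, h1, h2⟩ := (ha.and (aux_f_nonneg E)).exists
  linarith

lemma ubdim_le_of_eventually {X : Type*} [PseudoMetricSpace X] (E : Set X) {a : ℝ}
    (h : ∀ᶠ δ : ℝ in 𝓝[>] 0, Real.log (coveringNumber E δ) / (-Real.log δ) ≤ a) :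
    ubdim E ≤ a :=
  Filter.limsup_le_of_le (isCoboundedUnder_le_of_eventually_le _ (aux_f_nonneg E)) h

lemma coord_abs_le_norm {d : ℕ} (x : EuclideanSpace ℝ (Fin d)) (i : Fin d) : |x i| ≤ ‖x‖ := by
  rw [EuclideanSpace.norm_eq, ← Real.sqrt_sq (abs_nonneg (x i))]
  apply Real.sqrt_le_sqrt
  have := Finset.single_le_sum (f := fun j => ‖x j‖^2) (fun j _ => sq_nonneg _) (Finset.mem_univ i)
  simpa [Real.norm_eq_abs, sq_abs] using this

lemma covN_le {d : ℕ} {R : ℝ} (hR : 0 < R) (C : Set (EuclideanSpace ℝ (Fin d)))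
    (hC : C ⊆ Metric.ball 0 R) {δ : ℝ} (hδ0 : 0 < δ) (hδ1 : δ ≤ 1) :
    (coveringNumber C δ : ℝ) ≤ ((2*R*(d+1)+5)/δ)^d := by
  classical
  set h : ℝ := δ/(d+1) with hh_def
  have hd1 : (0:ℝ) < (d:ℝ)+1 := by positivity
  have hh : 0 < h := by positivity
  have hδeq : h * ((d:ℝ)+1) = δ := by rw [hh_def]; field_simp
  set M : ℤ := ⌈R/h⌉ + 1 with hM_def
  have hM1 : (1:ℤ) ≤ M := by
    have : (0:ℤ) ≤ ⌈R/h⌉ := Int.ceil_nonneg (by positivity)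
    omega
  have hMle : (M:ℝ) ≤ R/h + 2 := by
    have := (Int.ceil_lt_add_one (R/h)).le
    rw [hM_def]
    push_cast
    linarith
  have hMge : R/h + 1 ≤ (M:ℝ) := by
    have := Int.le_ceil (R/h)
    rw [hM_def]
    push_cast
    linarith
  set g : (Fin d → ℤ) → EuclideanSpace ℝ (Fin d) :=
    fun v => (WithLp.equiv 2 (Fin d → ℝ)).symm (fun i => h * v i) with hg_def
  set s : Finset (EuclideanSpace ℝ (Fin d)) :=
    (Fintype.piFinset fun _ : Fin d => Finset.Icc (-M) M).image g with hs_def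
  have hcover : C ⊆ ⋃ x ∈ s, Metric.ball x δ := by
    intro x hx
    have hxR : ‖x‖ < R := by simpa [Metric.mem_ball, dist_zero_right] using hC hx
    set v : Fin d → ℤ := fun i => round (x i / h) with hv_def
    have hvmem : v ∈ Fintype.piFinset fun _ : Fin d => Finset.Icc (-M) M := by
      rw [Fintype.mem_piFinset]
      intro i
      rw [Finset.mem_Icc]
      have h1 : |x i / h| ≤ R / h := by
        rw [abs_div, abs_of_pos hh]
        gcongr
        exact (coord_abs_le_norm x i).trans hxR.le
      have h2 : |x i / h - ((v i : ℤ) : ℝ)| ≤ 1/2 := by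
        simpa [hv_def] using abs_sub_round (x i / h)
      rw [abs_le] at h1 h2
      constructor
      · exact_mod_cast (by push_cast; linarith : ((-M : ℤ) : ℝ) ≤ ((v i : ℤ) : ℝ))
      · exact_mod_cast (by push_cast; linarith : ((v i : ℤ) : ℝ) ≤ ((M : ℤ) : ℝ))
    refine Set.mem_biUnion (Finset.mem_image_of_mem g hvmem) ?_
    rw [Metric.mem_ball, EuclideanSpace.dist_eq]
    have hcoord : ∀ i, dist (x i) (g v i) ^ 2 ≤ (h/2)^2 := by
      intro i
      have hgv : g v i = h * (v i : ℝ) := by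
        simp [hg_def, WithLp.equiv_symm_apply, PiLp.toLp_apply]
      rw [hgv, Real.dist_eq]
      have e : x i - h * (v i : ℝ) = h * (x i / h - (v i : ℝ)) := by
        field_simp
      rw [e, abs_mul, abs_of_pos hh]
      have h2 : |x i / h - ((v i : ℤ) : ℝ)| ≤ 1/2 := by
        simpa [hv_def] using abs_sub_round (x i / h)
      have : h * |x i / h - (v i : ℝ)| ≤ h * (1/2) := by
        apply mul_le_mul_of_nonneg_left h2 hh.le
      have hnn : 0 ≤ h * |x i / h - (v i : ℝ)| := mul_nonneg hh.le (abs_nonneg _)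
      have := pow_le_pow_left₀ hnn (by linarith : h * |x i / h - (v i : ℝ)| ≤ h/2) 2
      linarith
    have hsum : ∑ i, dist (x i) (g v i) ^ 2 ≤ (δ/2)^2 := by
      calc ∑ i, dist (x i) (g v i) ^ 2 ≤ ∑ _i : Fin d, (h/2)^2 :=
            Finset.sum_le_sum (fun i _ => hcoord i)
        _ = (d:ℝ) * (h/2)^2 := by rw [Finset.sum_const, Finset.card_univ]; simp [mul_comm]
        _ ≤ (δ/2)^2 := by
            rw [← hδeq]
            have hdd : (d:ℝ) ≤ ((d:ℝ)+1)^2 := by nlinarith [Nat.cast_nonneg (α := ℝ) d]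
            nlinarith [sq_nonneg h, hh.le]
    calc Real.sqrt (∑ i, dist (x i) (g v i) ^ 2) ≤ Real.sqrt ((δ/2)^2) :=
          Real.sqrt_le_sqrt hsum
      _ = δ/2 := Real.sqrt_sq (by positivity)
      _ < δ := by linarith
  have hcard : coveringNumber C δ ≤ s.card := Nat.sInf_le ⟨s, rfl, hcover⟩
  have hcard2 : (s.card : ℝ) ≤ ((2*M+1 : ℤ) : ℝ)^d := by
    have c1 : s.card ≤ (Fintype.piFinset fun _ : Fin d => Finset.Icc (-M) M).card :=
      Finset.card_image_le
    have c2 : (Fintype.piFinset fun _ : Fin d => Finset.Icc (-M) M).card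
        = (2*M+1).toNat ^ d := by
      rw [Fintype.card_piFinset]
      have e : (Finset.Icc (-M) M).card = (2*M+1).toNat := by
        rw [Int.card_Icc]; congr 1; ring
      simp [e]
    have hb : (0:ℤ) ≤ 2*M+1 := by omega
    calc (s.card : ℝ) ≤ (((2*M+1).toNat ^ d : ℕ) : ℝ) := by exact_mod_cast c2 ▸ c1
      _ = ((2*M+1 : ℤ) : ℝ)^d := by
          rw [Nat.cast_pow]
          congr 1
          exact_mod_cast Int.toNat_of_nonneg hb
  have hM2 : ((2*M+1 : ℤ) : ℝ) ≤ (2*R*((d:ℝ)+1)+5)/δ := by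
    have e1 : R/h = R*((d:ℝ)+1)/δ := by rw [hh_def]; field_simp
    have e2 : (2*R*((d:ℝ)+1)+5)/δ = 2*(R*((d:ℝ)+1)/δ) + 5/δ := by ring
    have e3 : (5:ℝ) ≤ 5/δ := by rw [le_div_iff₀ hδ0]; nlinarith
    push_cast
    rw [e2]
    rw [e1] at hMle
    linarith
  calc (coveringNumber C δ : ℝ) ≤ (s.card : ℝ) := by exact_mod_cast hcard
    _ ≤ ((2*M+1 : ℤ) : ℝ)^d := hcard2
    _ ≤ ((2*R*((d:ℝ)+1)+5)/δ)^d := by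
        apply pow_le_pow_left₀ (by positivity) hM2

section Dim
variable {d : ℕ}

lemma ubdim_le_of_bounded {C : Set (EuclideanSpace ℝ (Fin d))} (hC : IsBounded C) :
    ubdim C ≤ (d:ℝ)+1 := by
  obtain ⟨r, hr⟩ := hC.subset_closedBall 0
  set R : ℝ := max r 0 + 1 with hR_def
  have hR : 0 < R := by positivity
  have hCR : C ⊆ Metric.ball 0 R := by
    refine hr.trans ?_
    apply Metric.closedBall_subset_ball
    have : r ≤ max r 0 := le_max_left _ _
    linarith
  set K : ℝ := 2*R*((d:ℝ)+1)+5 with hK_def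
  have hK1 : (1:ℝ) ≤ K := by
    have : (0:ℝ) ≤ 2*R*((d:ℝ)+1) := by positivity
    rw [hK_def]; linarith
  have hKd : (0:ℝ) < K^d := by positivity
  set δ₀ : ℝ := min 1 (K^d)⁻¹ with hδ₀_def
  have hδ₀ : 0 < δ₀ := lt_min zero_lt_one (by positivity)
  apply ubdim_le_of_eventually
  filter_upwards [Ioo_mem_nhdsGT hδ₀] with δ hδ
  have hδ0 : 0 < δ := hδ.1
  have hδ1 : δ < 1 := lt_of_lt_of_le hδ.2 (min_le_left _ _)
  have hδK : δ ≤ (K^d)⁻¹ := le_of_lt (lt_of_lt_of_le hδ.2 (min_le_right _ _))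
  have hlogδ : 0 < -Real.log δ := by
    have := Real.log_neg hδ0 hδ1; linarith
  rw [div_le_iff₀ hlogδ]
  have hN : (coveringNumber C δ : ℝ) ≤ δ⁻¹^(d+1) := by
    have h1 := covN_le hR C hCR hδ0 hδ1.le
    have h2 : (K/δ)^d ≤ δ⁻¹^(d+1) := by
      have hKδ : K^d ≤ δ⁻¹ := by
        have := inv_anti₀ hδ0 hδK
        rwa [inv_inv] at this
      calc (K/δ)^d = K^d * (δ⁻¹)^d := by rw [div_eq_mul_inv, mul_pow]
        _ ≤ δ⁻¹ * (δ⁻¹)^d := by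
            apply mul_le_mul_of_nonneg_right hKδ (by positivity)
        _ = δ⁻¹^(d+1) := by ring
    exact h1.trans h2
  rcases Nat.eq_zero_or_pos (coveringNumber C δ) with h0 | hpos
  · rw [h0]
    simp only [Nat.cast_zero, Real.log_zero]
    positivity
  · have hlog : Real.log (coveringNumber C δ) ≤ Real.log (δ⁻¹^(d+1)) :=
      Real.log_le_log (by exact_mod_cast hpos) hN
    calc Real.log (coveringNumber C δ) ≤ Real.log (δ⁻¹^(d+1)) := hlog
      _ = ((d:ℝ)+1) * (-Real.log δ) := by
          rw [Real.log_pow, Real.log_inv]; push_cast; ring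

def pdimSet (A : Set (EuclideanSpace ℝ (Fin d))) : Set ℝ :=
  {a : ℝ | ∃ C : ℕ → Set (EuclideanSpace ℝ (Fin d)), (A ⊆ ⋃ i, C i) ∧
    (∀ i, IsBounded (C i)) ∧ ∀ i, ubdim (C i) ≤ a}

lemma pdim_eq (A : Set (EuclideanSpace ℝ (Fin d))) : pdim A = sInf (pdimSet A) := rfl

lemma pdimSet_bddBelow (A : Set (EuclideanSpace ℝ (Fin d))) : BddBelow (pdimSet A) := by
  refine ⟨0, fun a ha => ?_⟩
  obtain ⟨Cs, _, _, hub⟩ := ha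
  exact (ubdim_nonneg (Cs 0)).trans (hub 0)

lemma top_mem_pdimSet (A : Set (EuclideanSpace ℝ (Fin d))) : ((d:ℝ)+1) ∈ pdimSet A := by
  refine ⟨fun i => Metric.ball 0 ((i:ℝ)+1), ?_, fun i => isBounded_ball,
    fun i => ubdim_le_of_bounded isBounded_ball⟩
  intro x _
  obtain ⟨n, hn⟩ := exists_nat_gt ‖x‖
  exact mem_iUnion.mpr ⟨n, by rw [mem_ball_zero_iff]; linarith⟩

lemma pdim_mono {A B : Set (EuclideanSpace ℝ (Fin d))} (h : A ⊆ B) : pdim A ≤ pdim B := by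
  rw [pdim_eq, pdim_eq]
  refine csInf_le_csInf (pdimSet_bddBelow A) ⟨_, top_mem_pdimSet B⟩ ?_
  rintro a ⟨Cs, h1, h2, h3⟩
  exact ⟨Cs, h.trans h1, h2, h3⟩

lemma pdim_lt {A : Set (EuclideanSpace ℝ (Fin d))} {a : ℝ} (h : pdim A < a) :
    ∃ C : ℕ → Set (EuclideanSpace ℝ (Fin d)), (A ⊆ ⋃ i, C i) ∧
      (∀ i, IsBounded (C i)) ∧ ∀ i, ubdim (C i) ≤ a := by
  rw [pdim_eq] at h
  obtain ⟨b, hb, hba⟩ := (csInf_lt_iff (pdimSet_bddBelow A) ⟨_, top_mem_pdimSet A⟩).mp h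
  obtain ⟨Cs, h1, h2, h3⟩ := hb
  exact ⟨Cs, h1, h2, fun i => (h3 i).trans hba.le⟩

lemma pdim_iUnion_le (A : ℕ → Set (EuclideanSpace ℝ (Fin d))) (a : ℝ)
    (hA : ∀ n, pdim (A n) < a) : pdim (⋃ n, A n) ≤ a := by
  choose Cs h1 h2 h3 using fun n => pdim_lt (hA n)
  rw [pdim_eq]
  refine csInf_le (pdimSet_bddBelow _)
    ⟨fun m => Cs m.unpair.1 m.unpair.2, ?_, fun m => h2 _ _, fun m => h3 _ _⟩
  intro x hx
  obtain ⟨n, hxn⟩ := mem_iUnion.mp hx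
  obtain ⟨j, hj⟩ := mem_iUnion.mp (h1 n hxn)
  exact mem_iUnion.mpr ⟨Nat.pair n j, by simpa [Nat.unpair_pair] using hj⟩

end Dim

lemma gramVol_pos {d k : ℕ} {u : Fin k → EuclideanSpace ℝ (Fin d)}
    (h : LinearIndependent ℝ u) : 0 < gramVol u := by
  rw [gramVol, Real.sqrt_pos]
  have hpd : (Matrix.of fun i j => (inner ℝ (u i) (u j) : ℝ)).PosDef := by
    refine Matrix.PosDef.of_dotProduct_mulVec_pos ?_ ?_
    · ext i j
      simp only [Matrix.conjTranspose_apply, Matrix.of_apply, star_trivial]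
      exact real_inner_comm _ _
    · intro x hx
      have key : dotProduct (star x) ((Matrix.of fun i j => (inner ℝ (u i) (u j) : ℝ)).mulVec x)
          = (inner ℝ (∑ i, x i • u i) (∑ j, x j • u j) : ℝ) := by
        simp only [star_trivial, Matrix.mulVec, dotProduct, Matrix.of_apply,
          sum_inner, inner_sum, real_inner_smul_left, real_inner_smul_right, Finset.mul_sum]
        refine Finset.sum_congr rfl fun i _ => Finset.sum_congr rfl fun j _ => ?_
        rw [real_inner_comm (u j) (u i)]
        ring
      rw [key]
      have hv : (∑ i, x i • u i) ≠ 0 := by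
        intro hv0
        apply hx
        funext i
        exact Fintype.linearIndependent_iff.mp h x hv0 i
      have := real_inner_self_eq_norm_sq (∑ i, x i • u i)
      have hn : 0 < ‖∑ i, x i • u i‖ := norm_pos_iff.mpr hv
      rw [this]
      positivity
  exact hpd.det_pos


set_option maxHeartbeats 1000000 in
theorem stmt14 {d k : ℕ} (ν : EuclideanSpace ℝ (Fin d) → ℝ) (hν : IsNorm ν)
    (hC1 : ContDiffOn ℝ 1 ν {(0 : EuclideanSpace ℝ (Fin d))}ᶜ)
    (gradp : EuclideanSpace ℝ (Fin d) → EuclideanSpace ℝ (Fin d) → EuclideanSpace ℝ (Fin d))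
    (hgrad : ∀ z x, x ≠ z → HasGradientAt (fun y => ν (y - z)) (gradp z x) x)
    (E : Set (EuclideanSpace ℝ (Fin d))) (α : ℝ) (hα : 0 < α)
    (G : Set (EuclideanSpace ℝ (Fin d))) (hG : G.Countable)
    (hnt : ∀ L > (0:ℝ), ∀ z : Fin k → EuclideanSpace ℝ (Fin d), (∀ ℓ, z ℓ ∈ G) →
      ∀ F' ⊆ E, pdim E - α ≤ pdim F' →
        ∃ x ∈ F', gramVol (fun ℓ => gradp (z ℓ) x) < L) :
    ∃ F ⊆ E, pdim F = pdim E ∧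
      ∀ z : Fin k → EuclideanSpace ℝ (Fin d), (∀ ℓ, z ℓ ∈ G) →
        ∀ x ∈ F, ¬ LinearIndependent ℝ (fun ℓ => gradp (z ℓ) x) := by
  classical
  set T : Set (Fin k → EuclideanSpace ℝ (Fin d)) := {z | ∀ ℓ, z ℓ ∈ G} with hT_def
  have hTc : T.Countable := Set.countable_pi (fun _ => hG)
  have : Countable ↥T := hTc.to_subtype
  set F : Set (EuclideanSpace ℝ (Fin d)) := {x ∈ E | ∀ z : Fin k → EuclideanSpace ℝ (Fin d),
    (∀ ℓ, z ℓ ∈ G) → ¬ LinearIndependent ℝ (fun ℓ => gradp (z ℓ) x)} with hF_def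
  have hFE : F ⊆ E := fun x hx => hx.1
  refine ⟨F, hFE, ?_, fun z hz x hx => hx.2 z hz⟩
  refine le_antisymm (pdim_mono hFE) ?_
  by_contra hlt
  push_neg at hlt
  set A : ↥T × ℕ → Set (EuclideanSpace ℝ (Fin d)) := fun p =>
    {x ∈ E | 1/((p.2:ℝ)+1) ≤ gramVol (fun ℓ => gradp ((p.1 : Fin k → EuclideanSpace ℝ (Fin d)) ℓ) x)}
    with hA_def
  have hA : ∀ p : ↥T × ℕ, pdim (A p) < pdim E - α := by
    intro p
    by_contra hge
    push_neg at hge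
    obtain ⟨x, hxA, hxlt⟩ := hnt (1/((p.2:ℝ)+1)) (by positivity)
      (p.1 : Fin k → EuclideanSpace ℝ (Fin d)) p.1.2 (A p) (fun y hy => hy.1) hge
    exact absurd hxA.2 (not_le.mpr hxlt)
  have hEsub : E ⊆ F ∪ ⋃ p : ↥T × ℕ, A p := by
    intro x hxE
    by_cases hxF : x ∈ F
    · exact Or.inl hxF
    · right
      have : ¬ (∀ z : Fin k → EuclideanSpace ℝ (Fin d),
          (∀ ℓ, z ℓ ∈ G) → ¬ LinearIndependent ℝ (fun ℓ => gradp (z ℓ) x)) := by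
        intro hall
        exact hxF ⟨hxE, hall⟩
      push_neg at this
      obtain ⟨z, hz, hind⟩ := this
      have hv : 0 < gramVol (fun ℓ => gradp (z ℓ) x) := gramVol_pos hind
      obtain ⟨n, hn⟩ := exists_nat_one_div_lt hv
      refine mem_iUnion.mpr ⟨(⟨z, hz⟩, n), ⟨hxE, ?_⟩⟩
      exact_mod_cast hn.le
  -- countable stability
  obtain ⟨f, hf⟩ := exists_surjective_nat (Option (↥T × ℕ))
  set B : ℕ → Set (EuclideanSpace ℝ (Fin d)) := fun n => (f n).elim F A with hB_def
  set m : ℝ := max (pdim F) (pdim E - α) with hm_def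
  have hm : m < pdim E := max_lt hlt (by linarith)
  set a : ℝ := (m + pdim E)/2 with ha_def
  have hma : m < a := by rw [ha_def]; linarith
  have haE : a < pdim E := by rw [ha_def]; linarith
  have hB : ∀ n, pdim (B n) < a := by
    intro n
    rcases hfn : f n with _ | p
    · have : B n = F := by rw [hB_def]; simp [hfn]
      rw [this]
      exact lt_of_le_of_lt (le_max_left _ _) hma
    · have : B n = A p := by rw [hB_def]; simp [hfn]
      rw [this]
      exact lt_of_lt_of_le (hA p) ((le_max_right _ _).trans hma.le)
  have hcov : E ⊆ ⋃ n, B n := by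
    intro x hxE
    rcases hEsub hxE with hxF | hxA
    · obtain ⟨n, hn⟩ := hf none
      exact mem_iUnion.mpr ⟨n, by rw [hB_def]; simp [hn]; exact hxF⟩
    · obtain ⟨p, hp⟩ := mem_iUnion.mp hxA
      obtain ⟨n, hn⟩ := hf (some p)
      exact mem_iUnion.mpr ⟨n, by rw [hB_def]; simp [hn]; exact hp⟩
  have := (pdim_mono hcov).trans (pdim_iUnion_le B a hB)
  linarith
end
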